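/- arXiv:2404.12522 — 4 statements merged into one kernel-verified Lean document; each statement's English description precedes it below -/
import Mathlib

section
/- Let A and B be n×n real symmetric positive semidefinite matrices. Then log det(I + B) ≤ log det(I + A) + √n · ‖B − A‖_F. -/
open Matrix

private lemma trace_eq_sum_eig {n : ℕ} {C : Matrix (Fin n) (Fin n) ℝ}
    (hC : C.IsHermitian) : C.trace = ∑ i, hC.eigenvalues i := by
  have hU : (star (hC.eigenvectorUnitary : Matrix (Fin n) (Fin n) ℝ)) *
      (hC.eigenvectorUnitary : Matrix (Fin n) (Fin n) ℝ) = 1 :=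
    (Unitary.mem_iff.mp (hC.eigenvectorUnitary).2).1
  conv_lhs => rw [hC.spectral_theorem, Unitary.conjStarAlgAut_apply]
  rw [Matrix.trace_mul_comm, ← Matrix.mul_assoc, hU, Matrix.one_mul, Matrix.trace_diagonal]
  simp

private lemma log_det_le_trace_sub {n : ℕ} {C : Matrix (Fin n) (Fin n) ℝ}
    (hC : C.PosSemidef) (hd : 0 < C.det) : Real.log C.det ≤ C.trace - n := by
  have hdet : C.det = ∏ i, hC.1.eigenvalues i := by
    simpa using hC.1.det_eq_prod_eigenvalues
  have hev : ∀ i : Fin n, 0 < hC.1.eigenvalues i := by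
    intro i
    rcases (hC.eigenvalues_nonneg i).lt_or_eq with h | h
    · exact h
    · exfalso
      rw [hdet, Finset.prod_eq_zero (Finset.mem_univ i) h.symm] at hd
      exact lt_irrefl 0 hd
  have htr : C.trace = ∑ i, hC.1.eigenvalues i := trace_eq_sum_eig hC.1
  rw [hdet, htr, Real.log_prod (fun i _ => (hev i).ne')]
  calc ∑ i, Real.log (hC.1.eigenvalues i)
      ≤ ∑ i, (hC.1.eigenvalues i - 1) :=
        Finset.sum_le_sum fun i _ => Real.log_le_sub_one_of_pos (hev i)
    _ = (∑ i, hC.1.eigenvalues i) - n := by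
        rw [Finset.sum_sub_distrib]
        simp

/-- for `n × n` real symmetric PSD matrices `A`, `B`,
`log det (I + B) ≤ log det (I + A) + √n * ‖B - A‖_F`. -/
theorem logdet_perturbation_bound (n : ℕ) (A B : Matrix (Fin n) (Fin n) ℝ)
    (hA : A.PosSemidef) (hB : B.PosSemidef) :
    Real.log ((1 + B).det) ≤
      Real.log ((1 + A).det) + Real.sqrt n * Real.sqrt (∑ i, ∑ j, ((B - A) i j) ^ 2) := by
  set X : Matrix (Fin n) (Fin n) ℝ := 1 + A with hXdef
  set Y : Matrix (Fin n) (Fin n) ℝ := 1 + B with hYdef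
  have hX : X.PosDef := Matrix.PosDef.one.add_posSemidef hA
  have hY : Y.PosDef := Matrix.PosDef.one.add_posSemidef hB
  set M : Matrix (Fin n) (Fin n) ℝ := X⁻¹ with hMdef
  have hM : M.PosDef := hX.inv
  open scoped MatrixOrder in set S : Matrix (Fin n) (Fin n) ℝ := CFC.sqrt M with hSdef
  have hS : S.PosSemidef := by open scoped MatrixOrder in exact (CFC.sqrt_nonneg M).posSemidef
  have hSS : S * S = M := by open scoped MatrixOrder in exact CFC.sqrt_mul_sqrt_self M hM.posSemidef.nonneg
  have hSH : Sᴴ = S := hS.1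
  have hXdet : IsUnit X.det := hX.det_pos.ne'.isUnit
  have hMX : M * X = 1 := X.nonsing_inv_mul hXdet
  have hSunit : IsUnit S := by
    rw [Matrix.isUnit_iff_isUnit_det]
    have h2 : S.det * S.det = M.det := by rw [← Matrix.det_mul, hSS]
    have : S.det ≠ 0 := by
      intro h
      rw [h, mul_zero] at h2
      exact hM.det_pos.ne' h2.symm
    exact this.isUnit
  -- S * X * S = 1
  have hSXS : S * X * S = 1 := by
    have h1 : S * (S * X * S) = S * 1 := by
      rw [Matrix.mul_one, ← Matrix.mul_assoc, ← Matrix.mul_assoc, hSS, hMX, Matrix.one_mul]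
    exact hSunit.mul_left_cancel h1
  -- C := S * Y * S
  set C : Matrix (Fin n) (Fin n) ℝ := S * Y * S with hCdef
  have hC : C.PosSemidef := by
    have := hY.posSemidef.mul_mul_conjTranspose_same S
    rwa [hSH] at this
  have hMdet : M.det * X.det = 1 := by rw [← Matrix.det_mul, hMX, Matrix.det_one]
  have hCdet : C.det = M.det * Y.det := by
    rw [hCdef, Matrix.det_mul, Matrix.det_mul]
    rw [show S.det * Y.det * S.det = S.det * S.det * Y.det by ring,
      show S.det * S.det = M.det by rw [← Matrix.det_mul, hSS]]
  have hCdetpos : 0 < C.det := by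
    rw [hCdet]; exact mul_pos hM.det_pos hY.det_pos
  -- trace C = n + trace (M * (B - A))
  have hMY : M * Y = 1 + M * (B - A) := by
    have : Y = X + (B - A) := by rw [hXdef, hYdef]; abel
    rw [this, Matrix.mul_add, hMX]
  have htrC : C.trace = (n : ℝ) + (M * (B - A)).trace := by
    rw [hCdef, Matrix.trace_mul_comm, ← Matrix.mul_assoc, hSS, hMY, Matrix.trace_add,
      Matrix.trace_one]
    simp
  -- key log inequality
  have hkey : Real.log Y.det ≤ Real.log X.det + (M * (B - A)).trace := by
    have h1 := log_det_le_trace_sub hC hCdetpos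
    rw [hCdet, Real.log_mul hM.det_pos.ne' hY.det_pos.ne', htrC] at h1
    have hlogM : Real.log M.det = -Real.log X.det := by
      rw [eq_inv_of_mul_eq_one_left hMdet, Real.log_inv]
    rw [hlogM] at h1
    linarith
  -- M is symmetric
  have hMsymm : ∀ i j, M j i = M i j := by
    intro i j
    have := hM.isHermitian
    rw [Matrix.IsHermitian] at this
    conv_lhs => rw [← this]
    simp [Matrix.conjTranspose_apply]
  -- trace (M * E) = ∑ i j, M i j * E j i
  have htrME : (M * (B - A)).trace = ∑ i, ∑ j, M i j * (B - A) j i := by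
    simp [Matrix.trace, Matrix.diag, Matrix.mul_apply]
  -- Frobenius norm of M squared equals trace (M * M)
  have hfrobM : (M * M).trace = ∑ i, ∑ j, (M i j) ^ 2 := by
    simp only [Matrix.trace, Matrix.diag, Matrix.mul_apply]
    congr 1; funext i; congr 1; funext j
    rw [hMsymm i j, sq]
  -- 1 - M is PSD
  have h1M : (1 - M).PosSemidef := by
    have hSAS : (S * A * S).PosSemidef := by
      have := hA.mul_mul_conjTranspose_same S
      rwa [hSH] at this
    have : 1 - M = S * A * S := by
      have : S * A * S = S * X * S - S * (1 : Matrix (Fin n) (Fin n) ℝ) * S := by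
        rw [hXdef]
        noncomm_ring
      rw [this, hSXS, Matrix.mul_one, hSS]
    rwa [this]
  -- M - M*M is PSD
  have hM2 : (M - M * M).PosSemidef := by
    have hS1MS : (S * (1 - M) * S).PosSemidef := by
      have := h1M.mul_mul_conjTranspose_same S
      rwa [hSH] at this
    have h2 : S * M * S = M * M := by rw [← hSS]; noncomm_ring
    have : M - M * M = S * (1 - M) * S := by
      rw [Matrix.mul_sub, Matrix.sub_mul, Matrix.mul_one, hSS, h2]
    rwa [this]
  -- PSD matrices have nonneg trace
  have trace_nonneg : ∀ {P : Matrix (Fin n) (Fin n) ℝ}, P.PosSemidef → 0 ≤ P.trace := by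
    intro P hP
    have hdiag : ∀ i, 0 ≤ P i i := by
      intro i
      exact hP.diag_nonneg
    exact Finset.sum_nonneg fun i _ => hdiag i
  have htrM2 : (M * M).trace ≤ M.trace := by
    have := trace_nonneg hM2
    rw [Matrix.trace_sub] at this
    linarith
  have htrMn : M.trace ≤ (n : ℝ) := by
    have := trace_nonneg h1M
    rw [Matrix.trace_sub, Matrix.trace_one] at this
    simp at this ⊢
    linarith
  have hMfrob_le : ∑ i, ∑ j, (M i j) ^ 2 ≤ (n : ℝ) := by
    rw [← hfrobM]; linarith
  -- Cauchy-Schwarz bound on trace (M * E)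
  have hCS : (M * (B - A)).trace ≤
      Real.sqrt n * Real.sqrt (∑ i, ∑ j, ((B - A) i j) ^ 2) := by
    rw [htrME]
    set E := B - A
    have key : (∑ p : Fin n × Fin n, M p.1 p.2 * E p.2 p.1) ^ 2 ≤
        (∑ p : Fin n × Fin n, (M p.1 p.2) ^ 2) * (∑ p : Fin n × Fin n, (E p.2 p.1) ^ 2) :=
      Finset.sum_mul_sq_le_sq_mul_sq _ _ _
    have e1 : ∑ i, ∑ j, M i j * E j i = ∑ p : Fin n × Fin n, M p.1 p.2 * E p.2 p.1 :=
      (Fintype.sum_prod_type (f := fun p : Fin n × Fin n => M p.1 p.2 * E p.2 p.1)).symm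
    have e2 : ∑ p : Fin n × Fin n, (M p.1 p.2) ^ 2 = ∑ i, ∑ j, (M i j) ^ 2 :=
      Fintype.sum_prod_type (f := fun p : Fin n × Fin n => (M p.1 p.2) ^ 2)
    have e3 : ∑ p : Fin n × Fin n, (E p.2 p.1) ^ 2 = ∑ i, ∑ j, (E i j) ^ 2 := by
      rw [Fintype.sum_prod_type (f := fun p : Fin n × Fin n => (E p.2 p.1) ^ 2)]
      exact Finset.sum_comm
    have hE2 : 0 ≤ ∑ i, ∑ j, (E i j) ^ 2 :=
      Finset.sum_nonneg fun i _ => Finset.sum_nonneg fun j _ => sq_nonneg _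
    have hM2nn : 0 ≤ ∑ i, ∑ j, (M i j) ^ 2 :=
      Finset.sum_nonneg fun i _ => Finset.sum_nonneg fun j _ => sq_nonneg _
    rw [e1]
    calc ∑ p : Fin n × Fin n, M p.1 p.2 * E p.2 p.1
        ≤ Real.sqrt ((∑ p : Fin n × Fin n, M p.1 p.2 * E p.2 p.1) ^ 2) := by
          rw [Real.sqrt_sq_eq_abs]; exact le_abs_self _
      _ ≤ Real.sqrt ((∑ i, ∑ j, (M i j) ^ 2) * (∑ i, ∑ j, (E i j) ^ 2)) := by
          apply Real.sqrt_le_sqrt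
          rw [← e2, ← e3]; exact key
      _ = Real.sqrt (∑ i, ∑ j, (M i j) ^ 2) * Real.sqrt (∑ i, ∑ j, (E i j) ^ 2) :=
          Real.sqrt_mul hM2nn _
      _ ≤ Real.sqrt n * Real.sqrt (∑ i, ∑ j, (E i j) ^ 2) := by
          apply mul_le_mul_of_nonneg_right _ (Real.sqrt_nonneg _)
          exact Real.sqrt_le_sqrt hMfrob_le
  linarith
end

section
/- Let K and p be positive integers, u, a, b ∈ ℝᴷ with a ≠ u, θ, θ' ∈ ℝᵖ, J₁, …, J_K ∈ ℝᵖ, and κ ≥ 0. Suppose |b_k − a_k − ⟨J_k, θ' − θ⟩| ≤ κ for every k ∈ {1,…,K}. Set g = (a − u)/‖a − u‖₂. Then ‖b − u‖₂ ≥ ‖a − u‖₂ + Σ_{k=1}^{K} g_k·⟨J_k, θ' − θ⟩ − K·κ. -/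
open scoped RealInnerProductSpace

/-- almost convexity, abstract form: if `|b_k - a_k - ⟨J_k, θ' - θ⟩| ≤ κ`
for all `k`, `a ≠ u`, and `g = (a - u)/‖a - u‖₂`, then
`‖b - u‖₂ ≥ ‖a - u‖₂ + ∑_k g_k ⟨J_k, θ' - θ⟩ - K κ`. -/
theorem almost_convexity_norm (K p : ℕ) (hK : 0 < K) (hp : 0 < p)
    (u a b : EuclideanSpace ℝ (Fin K)) (hau : a ≠ u)
    (θ θ' : EuclideanSpace ℝ (Fin p)) (J : Fin K → EuclideanSpace ℝ (Fin p))
    (κ : ℝ) (hκ : 0 ≤ κ)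
    (hlin : ∀ k : Fin K, |b k - a k - ⟪J k, θ' - θ⟫| ≤ κ) :
    ‖a - u‖ + (∑ k : Fin K, (‖a - u‖⁻¹ • (a - u)) k * ⟪J k, θ' - θ⟫) - K * κ ≤
      ‖b - u‖ := by
  set g : EuclideanSpace ℝ (Fin K) := ‖a - u‖⁻¹ • (a - u) with hg
  have hne : a - u ≠ 0 := sub_ne_zero.mpr hau
  have hnorm : (0 : ℝ) < ‖a - u‖ := norm_pos_iff.mpr hne
  have hgnorm : ‖g‖ = 1 := by
    rw [hg, norm_smul, norm_inv, norm_norm, inv_mul_cancel₀ hnorm.ne']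
  -- |g k| ≤ 1
  have hgk : ∀ k : Fin K, |g k| ≤ 1 := by
    intro k
    have := EuclideanSpace.norm_eq g ▸ hgnorm
    have h2 : |g k| ^ 2 ≤ ∑ j : Fin K, |g j| ^ 2 :=
      Finset.single_le_sum (f := fun j => |g j| ^ 2)
        (fun j _ => sq_nonneg _) (Finset.mem_univ k)
    have h3 : ∑ j : Fin K, |g j| ^ 2 = 1 := by
      have := hgnorm
      rw [EuclideanSpace.norm_eq] at this
      have h4 : ∑ j : Fin K, ‖g j‖ ^ 2 = 1 := by
        have hs := Real.sq_sqrt (Finset.sum_nonneg fun j (_ : j ∈ Finset.univ) => sq_nonneg ‖g j‖)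
        rw [← hs, this, one_pow]
      simpa [Real.norm_eq_abs] using h4
    nlinarith [abs_nonneg (g k)]
  have hinner_ga : ⟪g, a - u⟫ = ‖a - u‖ := by
    rw [hg, real_inner_smul_left, real_inner_self_eq_norm_sq]
    field_simp
  have hinner_gb : ⟪g, b - u⟫ ≤ ‖b - u‖ := by
    calc ⟪g, b - u⟫ ≤ ‖g‖ * ‖b - u‖ := real_inner_le_norm _ _
      _ = ‖b - u‖ := by rw [hgnorm, one_mul]
  have hsplit : ⟪g, b - u⟫ = ⟪g, a - u⟫ + ⟪g, b - a⟫ := by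
    rw [← inner_add_right]
    congr 1
    abel
  have hgba : ⟪g, b - a⟫ = ∑ k : Fin K, g k * (b k - a k) := by
    rw [PiLp.inner_apply]
    simp [RCLike.inner_apply, PiLp.sub_apply, mul_comm]
  -- key estimate
  have hkey : ∀ k : Fin K, g k * ⟪J k, θ' - θ⟫ - κ ≤ g k * (b k - a k) := by
    intro k
    have h1 : |g k * (b k - a k) - g k * ⟪J k, θ' - θ⟫| ≤ κ := by
      rw [← mul_sub, abs_mul]
      calc |g k| * |b k - a k - ⟪J k, θ' - θ⟫| ≤ 1 * κ :=
        mul_le_mul (hgk k) (hlin k) (abs_nonneg _) zero_le_one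
        _ = κ := one_mul κ
    linarith [abs_le.mp h1]
  have hsum : (∑ k : Fin K, g k * ⟪J k, θ' - θ⟫) - K * κ ≤
      ∑ k : Fin K, g k * (b k - a k) := by
    have := Finset.sum_le_sum (s := Finset.univ) (fun k _ => hkey k)
    simpa [Finset.sum_sub_distrib, Finset.card_univ] using this
  calc ‖a - u‖ + (∑ k : Fin K, g k * ⟪J k, θ' - θ⟫) - K * κ
      ≤ ‖a - u‖ + ∑ k : Fin K, g k * (b k - a k) := by linarith
    _ = ⟪g, b - u⟫ := by rw [hsplit, hinner_ga, hgba]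
    _ ≤ ‖b - u‖ := hinner_gb
end

section
/- Let K and p be positive integers, u, a, b ∈ ℝᴷ, θ, θ' ∈ ℝᵖ, J₁, …, J_K ∈ ℝᵖ, and κ ∈ [0, 1/4]. Suppose |b_k − a_k − ⟨J_k, θ' − θ⟩| ≤ κ for every k ∈ {1,…,K}. Then ‖b − u‖₂²/2 ≥ ‖a − u‖₂²/4 + Σ_{k=1}^{K} (a_k − u_k)·⟨J_k, θ' − θ⟩ − κK/4. -/
open scoped RealInnerProductSpace

/-- almost convexity for the squared loss, abstract form: if
`|b_k - a_k - ⟨J_k, θ' - θ⟩| ≤ κ` for all `k` with `κ ∈ [0, 1/4]`, then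
`‖b - u‖₂²/2 ≥ ‖a - u‖₂²/4 + ∑_k (a_k - u_k) ⟨J_k, θ' - θ⟩ - κ K / 4`. -/
theorem almost_convexity_sq (K p : ℕ) (hK : 0 < K) (hp : 0 < p)
    (u a b : EuclideanSpace ℝ (Fin K))
    (θ θ' : EuclideanSpace ℝ (Fin p)) (J : Fin K → EuclideanSpace ℝ (Fin p))
    (κ : ℝ) (hκ : κ ∈ Set.Icc (0 : ℝ) (1/4))
    (hlin : ∀ k : Fin K, |b k - a k - ⟪J k, θ' - θ⟫| ≤ κ) :
    ‖a - u‖ ^ 2 / 4 + (∑ k : Fin K, (a k - u k) * ⟪J k, θ' - θ⟫) - κ * K / 4 ≤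
      ‖b - u‖ ^ 2 / 2 := by
  obtain ⟨hκ0, hκ4⟩ := hκ
  have hnorm : ∀ x : EuclideanSpace ℝ (Fin K), ‖x‖ ^ 2 = ∑ k, (x k) ^ 2 := by
    intro x
    rw [EuclideanSpace.norm_eq, Real.sq_sqrt (by positivity)]
    simp [sq_abs]
  have hsub : ∀ (x y : EuclideanSpace ℝ (Fin K)) (k : Fin K),
      (x - y) k = x k - y k := fun _ _ _ => rfl
  rw [hnorm, hnorm]
  simp only [hsub]
  have key : ∀ k : Fin K,
      (a k - u k) ^ 2 / 4 + (a k - u k) * ⟪J k, θ' - θ⟫ - κ / 4 ≤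
        (b k - u k) ^ 2 / 2 := by
    intro k
    have h := abs_le.mp (hlin k)
    have hE2 : (b k - a k - ⟪J k, θ' - θ⟫) ^ 2 ≤ κ / 4 := by
      nlinarith [h.1, h.2]
    nlinarith [sq_nonneg ((a k - u k) / 2 + (b k - a k - ⟪J k, θ' - θ⟫)),
      sq_nonneg (⟪J k, θ' - θ⟫ + (b k - a k - ⟪J k, θ' - θ⟫))]
  have hsum := Finset.sum_le_sum (fun k (_ : k ∈ Finset.univ) => key k)
  have hL : ∑ k : Fin K,
      ((a k - u k) ^ 2 / 4 + (a k - u k) * ⟪J k, θ' - θ⟫ - κ / 4) =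
      (∑ k : Fin K, (a k - u k) ^ 2) / 4 +
        (∑ k : Fin K, (a k - u k) * ⟪J k, θ' - θ⟫) - κ * K / 4 := by
    rw [Finset.sum_sub_distrib, Finset.sum_add_distrib, ← Finset.sum_div]
    simp [Finset.card_fin]
    ring
  have hR : ∑ k : Fin K, (b k - u k) ^ 2 / 2 =
      (∑ k : Fin K, (b k - u k) ^ 2) / 2 := by
    rw [← Finset.sum_div]
  linarith [hsum, hL.symm.le, hR.le]
end

section
/- Let p be a positive integer, T a positive integer, η > 0, c > 0 with η·c ≤ 1/4, ε ≥ 0, and θ' ∈ ℝᵖ. Let ℓ₁, …, ℓ_T : ℝᵖ → ℝ be nonnegative functions, g₁, …, g_T ∈ ℝᵖ, and θ₁, …, θ_{T+1} ∈ ℝᵖ satisfy, for all t ∈ {1,…,T}: θ_{t+1} = θ_t − η·g_t, ‖g_t‖₂² ≤ c·ℓ_t(θ_t), and ℓ_t(θ_t)/4 − ℓ_t(θ')/2 ≤ ⟨g_t, θ_t − θ'⟩ + ε. Then (1/8)·Σ_{t=1}^{T} ℓ_t(θ_t) ≤ (1/2)·Σ_{t=1}^{T} ℓ_t(θ') + ‖θ₁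 − θ'‖₂²/(2η) + T·ε. -/
open scoped RealInnerProductSpace

lemma telescope_Icc (f : ℕ → ℝ) : ∀ n : ℕ,
    ∑ t ∈ Finset.Icc 1 n, (f t - f (t + 1)) = f 1 - f (n + 1) := by
  intro n
  induction n with
  | zero => simp
  | succ n ih =>
    rw [Finset.sum_Icc_succ_top (by omega), ih]
    ring

/-- gradient descent with self-bounded gradients: with steps
`θ_{t+1} = θ_t - η g_t`, `‖g_t‖² ≤ c ℓ_t(θ_t)`, `η c ≤ 1/4`, nonnegative losses, and
`ℓ_t(θ_t)/4 - ℓ_t(θ')/2 ≤ ⟨g_t, θ_t - θ'⟩ + ε`, one has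
`(1/8) ∑_t ℓ_t(θ_t) ≤ (1/2) ∑_t ℓ_t(θ') + ‖θ₁ - θ'‖²/(2η) + T ε`. -/
theorem gd_self_bounded_telescoping (p T : ℕ) (hp : 0 < p) (hT : 0 < T)
    (η c ε : ℝ) (hη : 0 < η) (hc : 0 < c) (hηc : η * c ≤ 1 / 4) (hε : 0 ≤ ε)
    (θ' : EuclideanSpace ℝ (Fin p))
    (ℓ : ℕ → EuclideanSpace ℝ (Fin p) → ℝ)
    (hnn : ∀ t x, 0 ≤ ℓ t x)
    (g : ℕ → EuclideanSpace ℝ (Fin p))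
    (θ : ℕ → EuclideanSpace ℝ (Fin p))
    (hstep : ∀ t ∈ Finset.Icc 1 T, θ (t + 1) = θ t - η • g t)
    (hgb : ∀ t ∈ Finset.Icc 1 T, ‖g t‖ ^ 2 ≤ c * ℓ t (θ t))
    (hconv : ∀ t ∈ Finset.Icc 1 T, ℓ t (θ t) / 4 - ℓ t θ' / 2 ≤ ⟪g t, θ t - θ'⟫ + ε) :
    (1 / 8 : ℝ) * ∑ t ∈ Finset.Icc 1 T, ℓ t (θ t) ≤
      (1 / 2 : ℝ) * ∑ t ∈ Finset.Icc 1 T, ℓ t θ' +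
        ‖θ 1 - θ'‖ ^ 2 / (2 * η) + T * ε := by
  set D : ℕ → ℝ := fun t => ‖θ t - θ'‖ ^ 2 with hD
  have key : ∀ t ∈ Finset.Icc 1 T,
      ℓ t (θ t) / 8 ≤ ℓ t θ' / 2 + (D t - D (t + 1)) / (2 * η) + ε := by
    intro t ht
    have hexp : D (t + 1) = D t - 2 * η * ⟪g t, θ t - θ'⟫ + η ^ 2 * ‖g t‖ ^ 2 := by
      simp only [hD, hstep t ht]
      have : θ t - η • g t - θ' = (θ t - θ') - η • g t := by abel
      rw [this, norm_sub_sq_real, real_inner_smul_right, norm_smul,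
        real_inner_comm]
      simp [abs_of_pos hη]
      ring
    have h1 := hconv t ht
    have h2 := hgb t ht
    have h3 := hnn t (θ t)
    have hg2 : η * ‖g t‖ ^ 2 ≤ ℓ t (θ t) / 4 := by
      calc η * ‖g t‖ ^ 2 ≤ η * (c * ℓ t (θ t)) := by nlinarith
        _ ≤ (1/4) * ℓ t (θ t) := by nlinarith
        _ = ℓ t (θ t) / 4 := by ring
    have hinner : ⟪g t, θ t - θ'⟫ = (D t - D (t + 1)) / (2 * η) + η * ‖g t‖ ^ 2 / 2 := by
      field_simp [hexp]
      rw [hexp]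
      ring
    rw [hinner] at h1
    linarith
  have hsum := Finset.sum_le_sum key
  rw [Finset.sum_add_distrib, Finset.sum_add_distrib, Finset.sum_const,
    ← Finset.sum_div, ← Finset.sum_div, ← Finset.sum_div,
    telescope_Icc D T, Nat.card_Icc, nsmul_eq_mul] at hsum
  have hDpos : 0 ≤ D (T + 1) := by positivity
  have hD1 : D 1 = ‖θ 1 - θ'‖ ^ 2 := rfl
  have hle : (D 1 - D (T + 1)) / (2 * η) ≤ D 1 / (2 * η) :=
    div_le_div_of_nonneg_right (by linarith) (by linarith)
  have hTc : ((T + 1 - 1 : ℕ) : ℝ) = (T : ℝ) := by simp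
  rw [hTc] at hsum
  rw [hD1] at hle
  linarith
end
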